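/- The cost function c of the GBSM problem is not submodular: there exists an instance with two bins and three elements such that for S = {x_1} ⊆ T = {x_1, x_2} and x_3 ∉ T, c(S ∪ {x_3}) − c(S) < c(T ∪ {x_3}) − c(T). -/

import Mathlib

/-- The GBSM cost function is not submodular: there is an instance with two
bins and three elements where, for `S = {x₁} ⊆ T = {x₁,x₂}` and `x₃ ∉ T`,
`c(S ∪ {x₃}) − c(S) < c(T ∪ {x₃}) − c(T)`. -/
theorem stmt8 :
    ∃ (binCost : Fin 2 → ℝ) (assoc : Fin 2 → Fin 3 → ℝ),
      let cost : Finset (Fin 3) → ℝ := fun Y =>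
        min (min (binCost 0 + ∑ x ∈ Y, assoc 0 x)
                 (binCost 1 + ∑ x ∈ Y, assoc 1 x))
            (binCost 0 + binCost 1 + ∑ x ∈ Y, min (assoc 0 x) (assoc 1 x))
      cost ({0, 2} : Finset (Fin 3)) - cost ({0} : Finset (Fin 3)) <
        cost ({0, 1, 2} : Finset (Fin 3)) - cost ({0, 1} : Finset (Fin 3)) := by
  refine ⟨fun _ => 1, ![![1, 1, 10], ![1/2, 10, 1/2]], ?_⟩
  have e1 : ∀ f : Fin 3 → ℝ, ∑ x ∈ ({0,2} : Finset (Fin 3)), f x = f 0 + f 2 :=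
    fun f => Finset.sum_pair (by decide)
  have e2 : ∀ f : Fin 3 → ℝ, ∑ x ∈ ({0,1,2} : Finset (Fin 3)), f x = f 0 + f 1 + f 2 := by
    intro f
    rw [show ({0,1,2} : Finset (Fin 3)) = Finset.univ by decide, Fin.sum_univ_three]
  have e3 : ∀ f : Fin 3 → ℝ, ∑ x ∈ ({0,1} : Finset (Fin 3)), f x = f 0 + f 1 :=
    fun f => Finset.sum_pair (by decide)
  have e4 : ∀ f : Fin 3 → ℝ, ∑ x ∈ ({0} : Finset (Fin 3)), f x = f 0 :=
    fun f => Finset.sum_singleton f 0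
  simp only [e1, e2, e3, e4]
  norm_num [min_def, Matrix.cons_val_two, Matrix.head_cons, Matrix.tail_cons]
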